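/- Let $U_g^{a_1,a_2}$ ($a_1 \ge a_2 \ge 1$) be the unicyclic graph of order $n = q^2 + r$ ($1 \le r \le 2q+1$) obtained from a cycle of length $g$ by attaching two pendant paths of orders $a_1,a_2$ at one vertex. If $g \ge q^2 + 1$, then $b(U_g^{a_1,a_2}) \ge q+1$. -/

import Mathlib

open SimpleGraph

/-- A burning sequence of length `k` (0-indexed: `x 0, …, x (k-1)`):
the distance conditions and the covering condition. -/
def IsBurnSeq {V : Type*} (G : SimpleGraph V) (k : ℕ) (x : ℕ → V) : Prop :=
  (∀ i j : ℕ, i < j → j < k → (↑(j - i) : ℕ∞) ≤ G.edist (x i) (x j)) ∧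
  (∀ v : V, ∃ i < k, G.edist (x i) v ≤ (↑(k - 1 - i) : ℕ∞))

/-- The burning number of a graph: the least length of a burning sequence. -/
noncomputable def burningNumber {V : Type*} (G : SimpleGraph V) : ℕ :=
  sInf {k | ∃ x : ℕ → V, IsBurnSeq G k x}

/-- `G` is the unicyclic graph `U_g^{a₁,a₂}`: a cycle of length `g` with two pendant
paths of orders `a₁` and `a₂` attached at the vertex `x` (which has degree 4); all
other vertices have degree at most 2, the unique cycle has length `g`, `G` has
`g + a₁ + a₂` vertices and edges, and deleting `x` leaves three components of
orders `g - 1`, `a₁` and `a₂`. -/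
def IsUTwoArm {V : Type*} (G : SimpleGraph V) (x : V) (g a₁ a₂ : ℕ) : Prop :=
  G.Connected ∧ Nat.card V = g + a₁ + a₂ ∧ Nat.card G.edgeSet = g + a₁ + a₂ ∧
  G.girth = (g : ℕ∞) ∧
  (G.neighborSet x).ncard = 4 ∧
  (∀ v : V, v ≠ x → (G.neighborSet v).ncard ≤ 2) ∧
  ∃ c₁ c₂ c₃ : (G.induce ({x}ᶜ : Set V)).ConnectedComponent,
    c₁ ≠ c₂ ∧ c₁ ≠ c₃ ∧ c₂ ≠ c₃ ∧
    (∀ c : (G.induce ({x}ᶜ : Set V)).ConnectedComponent, c = c₁ ∨ c = c₂ ∨ c = c₃) ∧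
    Nat.card c₁.supp = g - 1 ∧ Nat.card c₂.supp = a₁ ∧ Nat.card c₃.supp = a₂

namespace BurnAux17

section Generic
variable {V : Type*} {G : SimpleGraph V}

lemma edist_eq_cast_dist {u v : V} (h : G.Reachable u v) :
    G.edist u v = (G.dist u v : ℕ∞) := by
  rw [SimpleGraph.dist, ENat.coe_toNat (edist_ne_top_iff_reachable.mpr h)]

lemma dist_getVert_left (hc : G.Connected) {u v : V} (p : G.Walk u v) :
    ∀ j, G.dist u (p.getVert j) ≤ j := by
  induction p with
  | nil =>
    intro j
    simp [Walk.getVert, SimpleGraph.dist_self]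
  | cons h q ih =>
    intro j
    cases j with
    | zero => simp
    | succ j =>
      rw [Walk.getVert_cons_succ]
      calc G.dist _ _ ≤ G.dist _ _ + G.dist _ _ := hc.dist_triangle
        _ ≤ 1 + j := by
            gcongr
            · exact le_of_eq (dist_eq_one_iff_adj.mpr h)
            · exact ih j
        _ = j + 1 := by omega

lemma dist_getVert_right {u v : V} (p : G.Walk u v) :
    ∀ j, G.dist (p.getVert j) v ≤ p.length - j := by
  induction p with
  | nil =>
    intro j
    simp [Walk.getVert, SimpleGraph.dist_self]
  | cons h q ih =>
    intro j
    cases j with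
    | zero =>
      simpa using dist_le (Walk.cons h q)
    | succ j =>
      rw [Walk.getVert_cons_succ]
      simpa using ih j
end Generic

section Generic2
variable {V : Type*} {G : SimpleGraph V}

lemma exists_pred (hc : G.Connected) {v u : V} {i : ℕ}
    (h : G.dist v u = i + 1) : ∃ w, G.Adj w u ∧ G.dist v w = i := by
  obtain ⟨p, hp⟩ := (hc v u).exists_walk_length_eq_dist
  have hlen : p.length = i + 1 := by rw [hp, h]
  have hadj : G.Adj (p.getVert i) (p.getVert (i + 1)) :=
    p.adj_getVert_succ (by omega)
  have hgv : p.getVert (i + 1) = u := by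
    rw [← hlen]; exact p.getVert_length
  have hadj' : G.Adj (p.getVert i) u := by simpa [hgv] using hadj
  refine ⟨p.getVert i, hadj', ?_⟩
  have h1 : G.dist v (p.getVert i) ≤ i := dist_getVert_left hc p i
  have h2 : G.dist v u ≤ G.dist v (p.getVert i) + 1 := by
    calc G.dist v u ≤ G.dist v (p.getVert i) + G.dist (p.getVert i) u := hc.dist_triangle
      _ ≤ G.dist v (p.getVert i) + 1 := by
          gcongr
          exact le_of_eq (dist_eq_one_iff_adj.mpr hadj')
  omega

lemma exists_burnSeq [Fintype V] (hc : G.Connected) :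
    ∃ k xs, IsBurnSeq G k xs := by
  haveI hne : Nonempty V := hc.nonempty
  obtain ⟨v₀⟩ := (inferInstance : Nonempty V)
  set e := Finset.univ.sup (fun u => G.dist v₀ u) with he
  obtain ⟨u₀, -, hu₀⟩ := Finset.exists_mem_eq_sup Finset.univ
    (Finset.univ_nonempty) (fun u => G.dist v₀ u)
  obtain ⟨p, hp⟩ := (hc v₀ u₀).exists_walk_length_eq_dist
  have hplen : p.length = e := by rw [hp, he, hu₀]
  refine ⟨e + 1, fun j => p.getVert j, ?_, ?_⟩
  · intro i j hij hj
    have hji : j ≤ e := by omega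
    have h1 : G.dist v₀ (p.getVert j) ≤ j := dist_getVert_left hc p j
    have h2 : G.dist (p.getVert j) u₀ ≤ e - j := by
      simpa [hplen] using dist_getVert_right p j
    have h3 : G.dist v₀ u₀ = e := by rw [he, hu₀]
    have h4 : j ≤ G.dist v₀ (p.getVert j) := by
      have := hc.dist_triangle (u := v₀) (v := p.getVert j) (w := u₀)
      omega
    have h5 : G.dist v₀ (p.getVert i) ≤ i := dist_getVert_left hc p i
    have h6 : j - i ≤ G.dist (p.getVert i) (p.getVert j) := by
      have := hc.dist_triangle (u := v₀) (v := p.getVert i) (w := p.getVert j)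
      omega
    rw [edist_eq_cast_dist (hc _ _)]
    exact_mod_cast Nat.cast_le.mpr h6
  · intro v
    refine ⟨0, by omega, ?_⟩
    have : G.dist (p.getVert 0) v ≤ e + 1 - 1 - 0 := by
      simp only [p.getVert_zero]
      simpa [he] using Finset.le_sup (f := fun u => G.dist v₀ u) (Finset.mem_univ v)
    rw [edist_eq_cast_dist (hc _ _)]
    exact_mod_cast Nat.cast_le.mpr this
end Generic2

section StructB
variable {V : Type*} {G : SimpleGraph V} {x : V}

/-- The connected component of `G - x` containing a vertex `u ≠ x`. -/
def mkC (G : SimpleGraph V) (x : V) {u : V} (h : u ≠ x) :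
    (G.induce ({x}ᶜ : Set V)).ConnectedComponent :=
  (G.induce ({x}ᶜ : Set V)).connectedComponentMk ⟨u, Set.mem_compl_singleton_iff.mpr h⟩

/-- Membership in `C = c₁.supp ∪ {x}`. -/
def inC (G : SimpleGraph V) (x : V)
    (c₁ : (G.induce ({x}ᶜ : Set V)).ConnectedComponent) (u : V) : Prop :=
  u = x ∨ ∃ h : u ≠ x, mkC G x h = c₁

lemma adj_mkC {a b : V} (ha : a ≠ x) (hb : b ≠ x) (hab : G.Adj a b) :
    mkC G x ha = mkC G x hb :=
  ConnectedComponent.eq.mpr (Adj.reachable (comap_adj.mpr hab))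

variable {c₁ : (G.induce ({x}ᶜ : Set V)).ConnectedComponent}

lemma inC_of_adj {a b : V} (hc : inC G x c₁ a) (ha : a ≠ x) (hab : G.Adj a b) :
    inC G x c₁ b := by
  rcases hc with h | ⟨h, hm⟩
  · exact absurd h ha
  · by_cases hb : b = x
    · exact Or.inl hb
    · exact Or.inr ⟨hb, (adj_mkC hb h hab.symm).trans hm⟩

lemma mem_support_of_inC :
    ∀ {a b : V} (p : G.Walk a b), inC G x c₁ a → ¬ inC G x c₁ b → x ∈ p.support := by
  intro a b p
  induction p with
  | nil => intro h1 h2; exact absurd h1 h2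
  | @cons a b c h q ih =>
    intro h1 h2
    by_cases hax : a = x
    · rw [Walk.support_cons, hax]; exact List.mem_cons_self
    · have hbC : inC G x c₁ b := inC_of_adj h1 hax h
      rw [Walk.support_cons]
      exact List.mem_cons_of_mem _ (ih hbC h2)

lemma dist_x_le_of_inC (hc : G.Connected) {a b : V} (ha : inC G x c₁ a)
    (hb : ¬ inC G x c₁ b) : G.dist a x ≤ G.dist a b := by
  classical
  obtain ⟨p, hp⟩ := (hc a b).exists_walk_length_eq_dist
  have hx : x ∈ p.support := mem_support_of_inC p ha hb
  calc G.dist a x ≤ (p.takeUntil x hx).length := dist_le _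
    _ ≤ p.length := Walk.length_takeUntil_le p hx
    _ = G.dist a b := hp

lemma exists_adj_x (hc : G.Connected)
    (c : (G.induce ({x}ᶜ : Set V)).ConnectedComponent) :
    ∀ {u y : V} (_ : G.Walk u y) (hy : y = x) (hu : u ≠ x), mkC G x hu = c →
      ∃ z, ∃ hz : z ≠ x, mkC G x hz = c ∧ G.Adj z x := by
  intro u y p
  induction p with
  | nil => intro hy hu _; exact absurd hy hu
  | @cons a b _ h q ih =>
    intro hy hu huc
    by_cases hb : b = x
    · exact ⟨a, hu, huc, hb ▸ h⟩
    · exact ih hy hb ((adj_mkC hb hu h.symm).trans huc)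
end StructB

section StructC
variable {V : Type*} [Fintype V] {G : SimpleGraph V} {x : V}
variable {c₁ c₂ c₃ : (G.induce ({x}ᶜ : Set V)).ConnectedComponent}

lemma supp_elt (hc2 : c₂.supp.Nonempty) : ∃ u, ∃ hu : u ≠ x, mkC G x hu = c₂ := by
  obtain ⟨w, hw⟩ := hc2
  refine ⟨w.1, w.2, ?_⟩
  have : (⟨w.1, Set.mem_compl_singleton_iff.mpr w.2⟩ : ({x}ᶜ : Set V)) = w :=
    Subtype.ext rfl
  unfold mkC
  rw [this]
  exact (ConnectedComponent.mem_supp_iff _ _).mp hw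

lemma nbr_x_inC_le (hconn : G.Connected)
    (hdeg4 : (G.neighborSet x).ncard = 4)
    (h12 : c₁ ≠ c₂) (h13 : c₁ ≠ c₃) (h23 : c₂ ≠ c₃)
    (hc2 : c₂.supp.Nonempty) (hc3 : c₃.supp.Nonempty) :
    {u | inC G x c₁ u ∧ G.Adj x u}.ncard ≤ 2 := by
  obtain ⟨u₂, hu₂, hu₂c⟩ := supp_elt hc2
  obtain ⟨u₃, hu₃, hu₃c⟩ := supp_elt hc3
  obtain ⟨p₂⟩ := hconn u₂ x
  obtain ⟨p₃⟩ := hconn u₃ x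
  obtain ⟨z₂, hz₂, hz₂c, hz₂a⟩ := exists_adj_x hconn c₂ p₂ rfl hu₂ hu₂c
  obtain ⟨z₃, hz₃, hz₃c, hz₃a⟩ := exists_adj_x hconn c₃ p₃ rfl hu₃ hu₃c
  have hz23 : z₂ ≠ z₃ := by
    rintro rfl
    apply h23
    rw [← hz₂c, ← hz₃c]
  have hsub : {u | inC G x c₁ u ∧ G.Adj x u} ⊆ G.neighborSet x \ {z₂, z₃} := by
    rintro u ⟨huC, hua⟩
    refine ⟨hua, ?_⟩
    rintro (rfl | rfl)
    · rcases huC with h | ⟨h, hm⟩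
      · exact hua.ne' h
      · exact h12 (hm ▸ hz₂c ▸ rfl)
    · rcases huC with h | ⟨h, hm⟩
      · exact hua.ne' h
      · exact h13 (hm ▸ hz₃c ▸ rfl)
  have hzsub : ({z₂, z₃} : Set V) ⊆ G.neighborSet x := by
    rintro z (rfl | rfl)
    · exact hz₂a.symm
    · exact hz₃a.symm
  have hd : (G.neighborSet x \ {z₂, z₃}).ncard = 2 := by
    rw [Set.ncard_diff hzsub, hdeg4, Set.ncard_pair hz23]
  calc {u | inC G x c₁ u ∧ G.Adj x u}.ncard
      ≤ (G.neighborSet x \ {z₂, z₃}).ncard := Set.ncard_le_ncard hsub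
    _ = 2 := hd

lemma cnbr_le (hconn : G.Connected)
    (hdeg4 : (G.neighborSet x).ncard = 4)
    (hdeg2 : ∀ v : V, v ≠ x → (G.neighborSet v).ncard ≤ 2)
    (h12 : c₁ ≠ c₂) (h13 : c₁ ≠ c₃) (h23 : c₂ ≠ c₃)
    (hc2 : c₂.supp.Nonempty) (hc3 : c₃.supp.Nonempty)
    {w : V} (hw : inC G x c₁ w) :
    {u | inC G x c₁ u ∧ G.Adj w u}.ncard ≤ 2 := by
  rcases eq_or_ne w x with rfl | hwx
  · exact nbr_x_inC_le hconn hdeg4 h12 h13 h23 hc2 hc3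
  · calc {u | inC G x c₁ u ∧ G.Adj w u}.ncard
        ≤ (G.neighborSet w).ncard := Set.ncard_le_ncard (fun u hu => hu.2)
      _ ≤ 2 := hdeg2 w hwx

lemma pred_inC (hconn : G.Connected) {v u : V} {i : ℕ}
    (hv : inC G x c₁ v) (hu : inC G x c₁ u) (hd : G.dist v u = i + 1) :
    ∃ w, inC G x c₁ w ∧ G.Adj w u ∧ G.dist v w = i := by
  obtain ⟨w, hadj, hdw⟩ := exists_pred hconn hd
  rcases hu with hux | ⟨hux, huc⟩
  · by_cases hwC : inC G x c₁ w
    · exact ⟨w, hwC, hadj, hdw⟩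
    · exfalso
      have h1 : G.dist v u ≤ G.dist v w := by
        rw [hux]; exact dist_x_le_of_inC hconn hv hwC
      omega
  · exact ⟨w, inC_of_adj (Or.inr ⟨hux, huc⟩) hux hadj.symm, hadj, hdw⟩
end StructC

section StructD
variable {V : Type*} [Fintype V] {G : SimpleGraph V} {x : V}
variable {c₁ c₂ c₃ : (G.induce ({x}ᶜ : Set V)).ConnectedComponent}

lemma sphere_le_two (hconn : G.Connected)
    (hdeg4 : (G.neighborSet x).ncard = 4)
    (hdeg2 : ∀ v : V, v ≠ x → (G.neighborSet v).ncard ≤ 2)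
    (h12 : c₁ ≠ c₂) (h13 : c₁ ≠ c₃) (h23 : c₂ ≠ c₃)
    (hc2 : c₂.supp.Nonempty) (hc3 : c₃.supp.Nonempty)
    {v : V} (hv : inC G x c₁ v) :
    ∀ j : ℕ, {u | inC G x c₁ u ∧ G.dist v u = j + 1}.ncard ≤ 2 := by
  intro j
  induction j with
  | zero =>
    calc {u | inC G x c₁ u ∧ G.dist v u = 0 + 1}.ncard
        ≤ {u | inC G x c₁ u ∧ G.Adj v u}.ncard := by
          apply Set.ncard_le_ncard ?_ (Set.toFinite _)
          rintro u ⟨h1, h2⟩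
          exact ⟨h1, dist_eq_one_iff_adj.mp (by simpa using h2)⟩
      _ ≤ 2 := cnbr_le hconn hdeg4 hdeg2 h12 h13 h23 hc2 hc3 hv
  | succ j ih =>
    have hstep : {u | inC G x c₁ u ∧ G.dist v u = (j + 1) + 1}.ncard ≤
        {u | inC G x c₁ u ∧ G.dist v u = j + 1}.ncard := by
      classical
      have hex : ∀ u : V, ∃ w, u ∈ {u | inC G x c₁ u ∧ G.dist v u = (j + 1) + 1} →
          inC G x c₁ w ∧ G.Adj w u ∧ G.dist v w = j + 1 := by
        intro u
        by_cases hu : u ∈ {u | inC G x c₁ u ∧ G.dist v u = (j + 1) + 1}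
        · obtain ⟨w, hw⟩ := pred_inC hconn hv hu.1 hu.2
          exact ⟨w, fun _ => hw⟩
        · exact ⟨v, fun h => absurd h hu⟩
      choose f hf using hex
      have hmaps : ∀ u ∈ {u | inC G x c₁ u ∧ G.dist v u = (j + 1) + 1},
          f u ∈ {u | inC G x c₁ u ∧ G.dist v u = j + 1} :=
        fun u hu => ⟨(hf u hu).1, (hf u hu).2.2⟩
      apply Set.ncard_le_ncard_of_injOn f hmaps ?_ (Set.toFinite _)
      intro u₁ hu₁ u₂ hu₂ hfe
      by_contra hne
      have hw1 := hf u₁ hu₁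
      have hw2 := hf u₂ hu₂
      rw [← hfe] at hw2
      obtain ⟨w', hw'C, hw'a, hw'd⟩ := pred_inC hconn hv hw1.1 hw1.2.2
      have hsub : ({u₁, u₂, w'} : Set V) ⊆ {u | inC G x c₁ u ∧ G.Adj (f u₁) u} := by
        rintro z (rfl | rfl | rfl)
        · exact ⟨hu₁.1, hw1.2.1⟩
        · exact ⟨hu₂.1, hw2.2.1⟩
        · exact ⟨hw'C, hw'a.symm⟩
      have hnu1 : w' ≠ u₁ := fun h => by
        have := hu₁.2; rw [← h] at this; omega
      have hnu2 : w' ≠ u₂ := fun h => by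
        have := hu₂.2; rw [← h] at this; omega
      have h3 : ({u₁, u₂, w'} : Set V).ncard = 3 := by
        rw [Set.ncard_insert_of_notMem (by simp [hne, hnu1.symm]),
          Set.ncard_insert_of_notMem (by simp [hnu2.symm]), Set.ncard_singleton]
      have := Set.ncard_le_ncard hsub (Set.toFinite _)
      have h2 := cnbr_le hconn hdeg4 hdeg2 h12 h13 h23 hc2 hc3 hw1.1
      omega
    exact hstep.trans ih

lemma ball_le_center (hconn : G.Connected)
    (hdeg4 : (G.neighborSet x).ncard = 4)
    (hdeg2 : ∀ v : V, v ≠ x → (G.neighborSet v).ncard ≤ 2)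
    (h12 : c₁ ≠ c₂) (h13 : c₁ ≠ c₃) (h23 : c₂ ≠ c₃)
    (hc2 : c₂.supp.Nonempty) (hc3 : c₃.supp.Nonempty)
    {v : V} (hv : inC G x c₁ v) :
    ∀ t : ℕ, {u | inC G x c₁ u ∧ G.dist v u ≤ t}.ncard ≤ 2 * t + 1 := by
  intro t
  induction t with
  | zero =>
    calc {u | inC G x c₁ u ∧ G.dist v u ≤ 0}.ncard
        ≤ ({v} : Set V).ncard := by
          apply Set.ncard_le_ncard ?_ (Set.toFinite _)
          rintro u ⟨h1, h2⟩
          have : G.dist v u = 0 := by omega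
          have := ((hconn v u).dist_eq_zero_iff).mp this
          simp [this]
      _ = 1 := Set.ncard_singleton v
  | succ t ih =>
    have hsub : {u | inC G x c₁ u ∧ G.dist v u ≤ t + 1} ⊆
        {u | inC G x c₁ u ∧ G.dist v u ≤ t} ∪
        {u | inC G x c₁ u ∧ G.dist v u = t + 1} := by
      rintro u ⟨h1, h2⟩
      rcases Nat.lt_or_ge (G.dist v u) (t + 1) with h | h
      · exact Or.inl ⟨h1, by omega⟩
      · exact Or.inr ⟨h1, by omega⟩
    calc {u | inC G x c₁ u ∧ G.dist v u ≤ t + 1}.ncard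
        ≤ _ := Set.ncard_le_ncard hsub (Set.toFinite _)
      _ ≤ {u | inC G x c₁ u ∧ G.dist v u ≤ t}.ncard +
          {u | inC G x c₁ u ∧ G.dist v u = t + 1}.ncard := Set.ncard_union_le _ _
      _ ≤ (2 * t + 1) + 2 := by
          have := sphere_le_two hconn hdeg4 hdeg2 h12 h13 h23 hc2 hc3 hv t
          omega
      _ = 2 * (t + 1) + 1 := by ring

lemma ball_le (hconn : G.Connected)
    (hdeg4 : (G.neighborSet x).ncard = 4)
    (hdeg2 : ∀ v : V, v ≠ x → (G.neighborSet v).ncard ≤ 2)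
    (h12 : c₁ ≠ c₂) (h13 : c₁ ≠ c₃) (h23 : c₂ ≠ c₃)
    (hc2 : c₂.supp.Nonempty) (hc3 : c₃.supp.Nonempty)
    (v : V) (t : ℕ) :
    {u | inC G x c₁ u ∧ G.dist v u ≤ t}.ncard ≤ 2 * t + 1 := by
  by_cases hv : inC G x c₁ v
  · exact ball_le_center hconn hdeg4 hdeg2 h12 h13 h23 hc2 hc3 hv t
  · have hsub : {u | inC G x c₁ u ∧ G.dist v u ≤ t} ⊆
        {u | inC G x c₁ u ∧ G.dist x u ≤ t} := by
      rintro u ⟨h1, h2⟩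
      refine ⟨h1, ?_⟩
      have h3 : G.dist u x ≤ G.dist u v := dist_x_le_of_inC hconn h1 hv
      have h4 : G.dist x u = G.dist u x := SimpleGraph.dist_comm
      have h5 : G.dist u v = G.dist v u := SimpleGraph.dist_comm
      omega
    calc {u | inC G x c₁ u ∧ G.dist v u ≤ t}.ncard
        ≤ {u | inC G x c₁ u ∧ G.dist x u ≤ t}.ncard :=
          Set.ncard_le_ncard hsub (Set.toFinite _)
      _ ≤ 2 * t + 1 :=
          ball_le_center hconn hdeg4 hdeg2 h12 h13 h23 hc2 hc3 (Or.inl rfl) t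

lemma ncard_biUnion_le {α : Type*} [Fintype α] (s : Finset ℕ) (f : ℕ → Set α) :
    (⋃ i ∈ s, f i).ncard ≤ ∑ i ∈ s, (f i).ncard := by
  classical
  induction s using Finset.induction with
  | empty => simp
  | insert a s hni ih =>
    rw [Finset.set_biUnion_insert, Finset.sum_insert hni]
    exact (Set.ncard_union_le _ _).trans (by omega)
end StructD

end BurnAux17

/-- For `U_g^{a₁,a₂}` (`a₁ ≥ a₂ ≥ 1`) of order `n = q² + r` with `1 ≤ r ≤ 2q + 1`:
if `g ≥ q² + 1`, then `b(U_g^{a₁,a₂}) ≥ q + 1`. -/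
theorem stmt_17 {V : Type*} [Fintype V] (G : SimpleGraph V) (x : V) (g a₁ a₂ n q r : ℕ)
    (ha : a₂ ≤ a₁) (ha2 : 1 ≤ a₂)
    (hn : n = g + a₁ + a₂) (hnqr : n = q ^ 2 + r) (hr1 : 1 ≤ r) (hr2 : r ≤ 2 * q + 1)
    (hG : IsUTwoArm G x g a₁ a₂) (hg : q ^ 2 + 1 ≤ g) :
    q + 1 ≤ burningNumber G := by
  classical
  obtain ⟨hconn, hcard, hecard, hgirth, hdeg4, hdeg2,
    c₁, c₂, c₃, h12, h13, h23, htot, hcd1, hcd2, hcd3⟩ := hG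
  by_contra hlt
  push_neg at hlt
  have hk : burningNumber G ≤ q := by omega
  have hne : {m | ∃ xs : ℕ → V, IsBurnSeq G m xs}.Nonempty := by
    obtain ⟨m, xs, h⟩ := BurnAux17.exists_burnSeq hconn
    exact ⟨m, xs, h⟩
  obtain ⟨xs, hxs⟩ : ∃ xs : ℕ → V, IsBurnSeq G (burningNumber G) xs := Nat.sInf_mem hne
  set k := burningNumber G with hkdef
  -- nonemptiness of the two pendant components
  have hc2ne : c₂.supp.Nonempty := by
    have h0 : 0 < Nat.card c₂.supp := by omega
    exact Set.nonempty_coe_sort.mp (Nat.card_pos_iff.mp h0).1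
  have hc3ne : c₃.supp.Nonempty := by
    have h0 : 0 < Nat.card c₃.supp := by omega
    exact Set.nonempty_coe_sort.mp (Nat.card_pos_iff.mp h0).1
  -- the vertex set of the cycle
  have hCset : {u | BurnAux17.inC G x c₁ u} = insert x (Subtype.val '' c₁.supp) := by
    ext u
    constructor
    · rintro (rfl | ⟨h, hm⟩)
      · exact Set.mem_insert _ _
      · refine Set.mem_insert_iff.mpr (Or.inr ?_)
        exact ⟨⟨u, Set.mem_compl_singleton_iff.mpr h⟩,
          (ConnectedComponent.mem_supp_iff _ _).mpr hm, rfl⟩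
    · rintro (rfl | ⟨w, hw, rfl⟩)
      · exact Or.inl rfl
      · refine Or.inr ⟨w.2, ?_⟩
        have hww : (⟨w.1, Set.mem_compl_singleton_iff.mpr w.2⟩ : ({x}ᶜ : Set V)) = w :=
          Subtype.ext rfl
        unfold BurnAux17.mkC
        rw [hww]
        exact (ConnectedComponent.mem_supp_iff _ _).mp hw
  have hxnotmem : x ∉ Subtype.val '' c₁.supp := by
    rintro ⟨w, -, hww⟩
    exact w.2 (Set.mem_singleton_iff.mpr hww)
  have hCcard : {u | BurnAux17.inC G x c₁ u}.ncard = g := by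
    rw [hCset, Set.ncard_insert_of_notMem hxnotmem (Set.toFinite _),
      Set.ncard_image_of_injective _ Subtype.val_injective]
    have : (c₁.supp).ncard = g - 1 := by
      rw [← Nat.card_coe_set_eq]; exact hcd1
    omega
  -- covering
  have hcover : {u | BurnAux17.inC G x c₁ u} ⊆
      ⋃ i ∈ Finset.range k, {u | BurnAux17.inC G x c₁ u ∧ G.dist (xs i) u ≤ k - 1 - i} := by
    intro u hu
    obtain ⟨i, hik, hball⟩ := hxs.2 u
    have hdist : G.dist (xs i) u ≤ k - 1 - i := by
      rw [BurnAux17.edist_eq_cast_dist (hconn _ _)] at hball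
      exact_mod_cast hball
    exact Set.mem_iUnion₂.mpr ⟨i, Finset.mem_range.mpr hik, ⟨hu, hdist⟩⟩
  -- counting
  have hcount : g ≤ ∑ i ∈ Finset.range k, (2 * (k - 1 - i) + 1) := by
    calc g = {u | BurnAux17.inC G x c₁ u}.ncard := hCcard.symm
      _ ≤ (⋃ i ∈ Finset.range k,
            {u | BurnAux17.inC G x c₁ u ∧ G.dist (xs i) u ≤ k - 1 - i}).ncard :=
          Set.ncard_le_ncard hcover (Set.toFinite _)
      _ ≤ ∑ i ∈ Finset.range k,
            ({u | BurnAux17.inC G x c₁ u ∧ G.dist (xs i) u ≤ k - 1 - i}).ncard :=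
          BurnAux17.ncard_biUnion_le _ _
      _ ≤ ∑ i ∈ Finset.range k, (2 * (k - 1 - i) + 1) := by
          apply Finset.sum_le_sum
          intro i hi
          exact BurnAux17.ball_le hconn hdeg4 hdeg2 h12 h13 h23 hc2ne hc3ne (xs i) _
  have hsum : ∑ i ∈ Finset.range k, (2 * (k - 1 - i) + 1) = k * k := by
    have hrefl := Finset.sum_range_reflect (fun t => 2 * t + 1) k
    rw [hrefl]
    clear hrefl
    induction k with
    | zero => simp
    | succ m ih =>
      rw [Finset.sum_range_succ, ih]
      ring
  have hkk : k * k ≤ q * q := Nat.mul_le_mul hk hk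
  rw [pow_two] at hg
  omega
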